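/- Let 0 < q < p ≤ 1, n ≥ 1, and α, β ≥ 0. For the (p,q)-Bernstein-Stancu operator S_{n,p,q}, applied to the identity function f(t) = t, one has S_{n,p,q}(t; x) = ([n]_{p,q} x + α)/([n]_{p,q} + β) for all x ∈ [0,1]. -/

import Mathlib

open Finset Filter

noncomputable def pqInt (p q : ℝ) (n : ℕ) : ℝ := ∑ i ∈ Finset.range n, p ^ (n - 1 - i) * q ^ i

noncomputable def pqFact (p q : ℝ) (n : ℕ) : ℝ := ∏ j ∈ Finset.range n, pqInt p q (j + 1)

noncomputable def pqChoose (p q : ℝ) (n k : ℕ) : ℝ :=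
  pqFact p q n / (pqFact p q k * pqFact p q (n - k))

noncomputable def pqBasis (p q : ℝ) (n k : ℕ) (x : ℝ) : ℝ :=
  (1 / p ^ (n * (n - 1) / 2)) * pqChoose p q n k * p ^ (k * (k - 1) / 2) * x ^ k *
    ∏ s ∈ Finset.range (n - k), (p ^ s - q ^ s * x)

noncomputable def S (p q α β : ℝ) (n : ℕ) (f : ℝ → ℝ) (x : ℝ) : ℝ :=
  ∑ k ∈ Finset.range (n + 1),
    pqBasis p q n k x * f ((p ^ (n - k) * pqInt p q k + α) / (pqInt p q n + β))

lemma pqInt_zero (p q : ℝ) : pqInt p q 0 = 0 := by simp [pqInt]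

lemma pqInt_pos {p q : ℝ} (hp : 0 < p) (hq : 0 < q) {n : ℕ} (hn : 1 ≤ n) :
    0 < pqInt p q n := by
  apply Finset.sum_pos
  · intro i _; positivity
  · exact ⟨0, Finset.mem_range.2 hn⟩

lemma pqFact_pos {p q : ℝ} (hp : 0 < p) (hq : 0 < q) (n : ℕ) : 0 < pqFact p q n := by
  apply Finset.prod_pos
  intro j _
  exact pqInt_pos hp hq (Nat.succ_le_succ (Nat.zero_le j))

lemma pqFact_succ (p q : ℝ) (n : ℕ) :
    pqFact p q (n + 1) = pqFact p q n * pqInt p q (n + 1) :=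
  Finset.prod_range_succ _ _

lemma pqFact_zero (p q : ℝ) : pqFact p q 0 = 1 := by simp [pqFact]

lemma pqInt_add (p q : ℝ) (a b : ℕ) :
    pqInt p q (a + b) = p ^ b * pqInt p q a + q ^ a * pqInt p q b := by
  unfold pqInt
  rw [Finset.sum_range_add, Finset.mul_sum, Finset.mul_sum]
  congr 1
  · apply Finset.sum_congr rfl
    intro i hi
    rw [Finset.mem_range] at hi
    have h1 : a + b - 1 - i = b + (a - 1 - i) := by omega
    rw [h1, pow_add]; ring
  · apply Finset.sum_congr rfl
    intro i hi
    rw [Finset.mem_range] at hi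
    have h1 : a + b - 1 - (a + i) = b - 1 - i := by omega
    have h2 : q ^ (a + i) = q ^ a * q ^ i := pow_add q a i
    rw [h1, h2]; ring

lemma pqChoose_pascal {p q : ℝ} (hp : 0 < p) (hq : 0 < q) (m k : ℕ) (hk1 : 1 ≤ k) (hkm : k ≤ m) :
    pqChoose p q (m + 1) k = p ^ k * pqChoose p q m k + q ^ (m + 1 - k) * pqChoose p q m (k - 1) := by
  obtain ⟨j, rfl⟩ : ∃ j, k = j + 1 := ⟨k - 1, by omega⟩
  obtain ⟨a, rfl⟩ : ∃ a, m = j + 1 + a := ⟨m - (j + 1), by omega⟩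
  unfold pqChoose
  have h1 : j + 1 + a + 1 - (j + 1) = a + 1 := by omega
  have h2 : j + 1 + a - (j + 1) = a := by omega
  have h3 : j + 1 - 1 = j := by omega
  have h4 : j + 1 + a - j = a + 1 := by omega
  rw [h1, h2, h3, h4]
  have E : pqInt p q ((a + 1) + (j + 1)) = p ^ (j + 1) * pqInt p q (a + 1) + q ^ (a + 1) * pqInt p q (j + 1) :=
    pqInt_add p q (a + 1) (j + 1)
  have hF1 : pqFact p q (j + 1 + a + 1) = pqFact p q (j + 1 + a) * pqInt p q (j + 1 + a + 1) := pqFact_succ _ _ _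
  have hF2 : pqFact p q (j + 1) = pqFact p q j * pqInt p q (j + 1) := pqFact_succ _ _ _
  have hF3 : pqFact p q (a + 1) = pqFact p q a * pqInt p q (a + 1) := pqFact_succ _ _ _
  have hn : (a + 1) + (j + 1) = j + 1 + a + 1 := by omega
  rw [hn] at E
  have z1 := (pqFact_pos hp hq (j + 1)).ne'
  have z2 := (pqFact_pos hp hq (a + 1)).ne'
  have z3 := (pqFact_pos hp hq j).ne'
  have z4 := (pqFact_pos hp hq a).ne'
  have z5 := (pqInt_pos hp hq (Nat.le_add_left 1 j) : 0 < pqInt p q (j+1)).ne'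
  have z6 := (pqInt_pos hp hq (Nat.le_add_left 1 a) : 0 < pqInt p q (a+1)).ne'
  rw [hF1, hF2, hF3]
  field_simp
  linear_combination pqFact p q (j+1+a) * E

lemma pqChoose_zero {p q : ℝ} (hp : 0 < p) (hq : 0 < q) (n : ℕ) : pqChoose p q n 0 = 1 := by
  unfold pqChoose
  rw [pqFact_zero]
  simp
  exact (pqFact_pos hp hq n).ne'

lemma pqChoose_self {p q : ℝ} (hp : 0 < p) (hq : 0 < q) (n : ℕ) : pqChoose p q n n = 1 := by
  unfold pqChoose
  rw [Nat.sub_self, pqFact_zero]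
  rw [mul_one]
  exact div_self (pqFact_pos hp hq n).ne'


lemma shuffle (f g h : ℕ → ℝ) (m : ℕ) (hfg : ∀ k ∈ Finset.range m, h (k + 1) = f (k + 1) + g k)
    (h0 : h 0 = f 0) (htop : h (m + 1) = g m) :
    ∑ k ∈ Finset.range (m + 1 + 1), h k = ∑ k ∈ Finset.range (m + 1), (f k + g k) := by
  rw [Finset.sum_range_succ h (m + 1), Finset.sum_range_succ' h m, h0, htop,
    Finset.sum_add_distrib, Finset.sum_range_succ' f m, Finset.sum_range_succ g m,
    Finset.sum_congr rfl hfg, Finset.sum_add_distrib]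
  ring

lemma sumA {p q : ℝ} (hp : 0 < p) (hq : 0 < q) (x : ℝ) (m : ℕ) :
    ∑ k ∈ Finset.range (m + 1), pqChoose p q m k * p ^ (k * (k - 1) / 2) * x ^ k *
      ∏ s ∈ Finset.range (m - k), (p ^ s - q ^ s * x) = p ^ (m * (m - 1) / 2) := by
  induction m with
  | zero => simp [pqChoose_zero hp hq]
  | succ m ih =>
    -- abbreviations as plain functions
    have key : ∀ k ∈ Finset.range m,
        pqChoose p q (m + 1) (k + 1) * p ^ ((k + 1) * (k + 1 - 1) / 2) * x ^ (k + 1) *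
          ∏ s ∈ Finset.range (m + 1 - (k + 1)), (p ^ s - q ^ s * x)
        = (p ^ (k + 1) * pqChoose p q m (k + 1) * p ^ ((k + 1) * (k + 1 - 1) / 2) * x ^ (k + 1) *
            ∏ s ∈ Finset.range (m + 1 - (k + 1)), (p ^ s - q ^ s * x))
          + (q ^ (m - k) * pqChoose p q m k * p ^ ((k + 1) * (k + 1 - 1) / 2) * x ^ (k + 1) *
            ∏ s ∈ Finset.range (m - k), (p ^ s - q ^ s * x)) := by
      intro k hk
      rw [Finset.mem_range] at hk
      have hsub : m + 1 - (k + 1) = m - k := by omega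
      rw [pqChoose_pascal hp hq m (k + 1) (by omega) (by omega), hsub]
      simp only [Nat.add_sub_cancel]
      ring
    rw [shuffle
      (fun k => p ^ k * pqChoose p q m k * p ^ (k * (k - 1) / 2) * x ^ k *
        ∏ s ∈ Finset.range (m + 1 - k), (p ^ s - q ^ s * x))
      (fun k => q ^ (m - k) * pqChoose p q m k * p ^ ((k + 1) * (k + 1 - 1) / 2) * x ^ (k + 1) *
        ∏ s ∈ Finset.range (m - k), (p ^ s - q ^ s * x))
      (fun k => pqChoose p q (m + 1) k * p ^ (k * (k - 1) / 2) * x ^ k *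
        ∏ s ∈ Finset.range (m + 1 - k), (p ^ s - q ^ s * x))
      m key (by simp [pqChoose_zero hp hq]) (by simp [pqChoose_self hp hq])]
    have key2 : ∀ k ∈ Finset.range (m + 1),
        (p ^ k * pqChoose p q m k * p ^ (k * (k - 1) / 2) * x ^ k *
          ∏ s ∈ Finset.range (m + 1 - k), (p ^ s - q ^ s * x))
        + (q ^ (m - k) * pqChoose p q m k * p ^ ((k + 1) * (k + 1 - 1) / 2) * x ^ (k + 1) *
          ∏ s ∈ Finset.range (m - k), (p ^ s - q ^ s * x))
        = p ^ m * (pqChoose p q m k * p ^ (k * (k - 1) / 2) * x ^ k *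
          ∏ s ∈ Finset.range (m - k), (p ^ s - q ^ s * x)) := by
      intro k hk
      rw [Finset.mem_range] at hk
      rw [show m + 1 - k = (m - k) + 1 by omega, Finset.prod_range_succ,
        Nat.triangle_succ k, pow_add]
      have hpm : p ^ k * p ^ (m - k) = p ^ m := by
        rw [← pow_add]; congr 1; omega
      linear_combination (pqChoose p q m k * p ^ (k * (k - 1) / 2) * x ^ k *
        ∏ s ∈ Finset.range (m - k), (p ^ s - q ^ s * x)) * hpm
    rw [Finset.sum_congr rfl key2, ← Finset.mul_sum, ih, Nat.triangle_succ m, pow_add]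
    ring

lemma pqChoose_mul_pqInt {p q : ℝ} (hp : 0 < p) (hq : 0 < q) (m k : ℕ) (hk : k ≤ m) :
    pqInt p q (k + 1) * pqChoose p q (m + 1) (k + 1) = pqInt p q (m + 1) * pqChoose p q m k := by
  unfold pqChoose
  rw [pqFact_succ p q m, pqFact_succ p q k, show m + 1 - (k + 1) = m - k from by omega]
  have z1 := (pqFact_pos hp hq k).ne'
  have z2 := (pqFact_pos hp hq (m - k)).ne'
  have z3 := (pqInt_pos hp hq (Nat.le_add_left 1 k) : 0 < pqInt p q (k + 1)).ne'
  field_simp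

lemma sumB {p q : ℝ} (hp : 0 < p) (hq : 0 < q) (x : ℝ) (m : ℕ) :
    ∑ k ∈ Finset.range (m + 1 + 1), pqChoose p q (m + 1) k * p ^ (k * (k - 1) / 2) * x ^ k *
      (∏ s ∈ Finset.range (m + 1 - k), (p ^ s - q ^ s * x)) * (p ^ (m + 1 - k) * pqInt p q k)
    = p ^ ((m + 1) * (m + 1 - 1) / 2) * pqInt p q (m + 1) * x := by
  have h1 : ∑ k ∈ Finset.range (m + 1 + 1), pqChoose p q (m + 1) k * p ^ (k * (k - 1) / 2) * x ^ k *
      (∏ s ∈ Finset.range (m + 1 - k), (p ^ s - q ^ s * x)) * (p ^ (m + 1 - k) * pqInt p q k)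
      = (∑ k ∈ Finset.range (m + 1), pqChoose p q (m + 1) (k + 1) * p ^ ((k + 1) * (k + 1 - 1) / 2) * x ^ (k + 1) *
          (∏ s ∈ Finset.range (m + 1 - (k + 1)), (p ^ s - q ^ s * x)) * (p ^ (m + 1 - (k + 1)) * pqInt p q (k + 1)))
        + pqChoose p q (m + 1) 0 * p ^ (0 * (0 - 1) / 2) * x ^ 0 *
          (∏ s ∈ Finset.range (m + 1 - 0), (p ^ s - q ^ s * x)) * (p ^ (m + 1 - 0) * pqInt p q 0) :=
    Finset.sum_range_succ' _ _
  rw [h1]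
  have key : ∀ k ∈ Finset.range (m + 1),
      pqChoose p q (m + 1) (k + 1) * p ^ ((k + 1) * (k + 1 - 1) / 2) * x ^ (k + 1) *
        (∏ s ∈ Finset.range (m + 1 - (k + 1)), (p ^ s - q ^ s * x)) * (p ^ (m + 1 - (k + 1)) * pqInt p q (k + 1))
      = pqInt p q (m + 1) * x * p ^ m * (pqChoose p q m k * p ^ (k * (k - 1) / 2) * x ^ k *
          ∏ s ∈ Finset.range (m - k), (p ^ s - q ^ s * x)) := by
    intro k hk
    rw [Finset.mem_range] at hk
    rw [show m + 1 - (k + 1) = m - k from by omega, Nat.triangle_succ k, pow_add]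
    have hc := pqChoose_mul_pqInt hp hq m k (by omega)
    have hpm : p ^ k * p ^ (m - k) = p ^ m := by rw [← pow_add]; congr 1; omega
    linear_combination (p ^ (k * (k - 1) / 2) * p ^ k * x ^ (k + 1) *
        (∏ s ∈ Finset.range (m - k), (p ^ s - q ^ s * x)) * p ^ (m - k)) * hc
      + (pqInt p q (m + 1) * pqChoose p q m k * p ^ (k * (k - 1) / 2) * x ^ (k + 1) *
        (∏ s ∈ Finset.range (m - k), (p ^ s - q ^ s * x))) * hpm
  rw [Finset.sum_congr rfl key, ← Finset.mul_sum, sumA hp hq x m, pqInt_zero,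
    Nat.triangle_succ m, pow_add]
  ring

theorem S_id (p q α β : ℝ) (hq : 0 < q) (hqp : q < p) (hp : p ≤ 1)
    (hα : 0 ≤ α) (hβ : 0 ≤ β) (n : ℕ) (hn : 1 ≤ n)
    (x : ℝ) (hx : x ∈ Set.Icc (0 : ℝ) 1) :
    S p q α β n (fun t => t) x = (pqInt p q n * x + α) / (pqInt p q n + β) := by
  have hp' : 0 < p := hq.trans hqp
  obtain ⟨m, rfl⟩ : ∃ m, n = m + 1 := ⟨n - 1, by omega⟩
  have hD : 0 < pqInt p q (m + 1) + β :=
    add_pos_of_pos_of_nonneg (pqInt_pos hp' hq (Nat.le_add_left 1 m)) hβ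
  have hP : (0:ℝ) < p ^ ((m + 1) * (m + 1 - 1) / 2) := by positivity
  simp only [S, pqBasis]
  have termeq : ∀ k ∈ Finset.range (m + 1 + 1),
      (1 / p ^ ((m + 1) * (m + 1 - 1) / 2) * pqChoose p q (m + 1) k * p ^ (k * (k - 1) / 2) * x ^ k *
          ∏ s ∈ Finset.range (m + 1 - k), (p ^ s - q ^ s * x)) *
        ((p ^ (m + 1 - k) * pqInt p q k + α) / (pqInt p q (m + 1) + β))
      = 1 / (p ^ ((m + 1) * (m + 1 - 1) / 2) * (pqInt p q (m + 1) + β)) *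
          (pqChoose p q (m + 1) k * p ^ (k * (k - 1) / 2) * x ^ k *
            (∏ s ∈ Finset.range (m + 1 - k), (p ^ s - q ^ s * x)) * (p ^ (m + 1 - k) * pqInt p q k)
          + α * (pqChoose p q (m + 1) k * p ^ (k * (k - 1) / 2) * x ^ k *
            ∏ s ∈ Finset.range (m + 1 - k), (p ^ s - q ^ s * x))) := by
    intro k _
    have h1 := hP.ne'
    have h2 := hD.ne'
    field_simp
    ring
  rw [Finset.sum_congr rfl termeq, ← Finset.mul_sum, Finset.sum_add_distrib, ← Finset.mul_sum,
    sumB hp' hq x m, sumA hp' hq x (m + 1)]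
  have h1 := hP.ne'
  have h2 := hD.ne'
  field_simp
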